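/- arXiv:2103.07275 — 2 statements merged into one kernel-verified Lean document; each statement's English description precedes it below -/
import Mathlib

section
/- Let K* = Pᶠ·Hᵀ·(H·Pᶠ·Hᵀ + R)⁻¹ be the Kalman gain. Then for every n×m real matrix K, log(det(Pᵃ(K*))) ≤ log(det(Pᵃ(K))); that is, the Kalman gain minimizes the logarithm of the generalized variance of the analysis distribution over all gain matrices. -/
open Matrix

-- transpose versions of psd conjugation
lemma psd_mul_mul_transpose {p q : ℕ} {A : Matrix (Fin q) (Fin q) ℝ}
    (hA : A.PosSemidef) (B : Matrix (Fin p) (Fin q) ℝ) :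
    (B * A * Bᵀ).PosSemidef := by
  have := hA.mul_mul_conjTranspose_same B
  simpa [conjTranspose_eq_transpose_of_trivial] using this

lemma one_le_det_one_add {p : ℕ} {M : Matrix (Fin p) (Fin p) ℝ}
    (hM : M.PosSemidef) : 1 ≤ (1 + M).det := by
  have hH := hM.1
  have hU := (Matrix.mem_unitaryGroup_iff).mp hH.eigenvectorUnitary.2
  have h : (1 + M) = (hH.eigenvectorUnitary : Matrix _ _ ℝ) *
      (1 + diagonal (RCLike.ofReal ∘ hH.eigenvalues)) *
      (star (hH.eigenvectorUnitary : Matrix _ _ ℝ)) := by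
    rw [mul_add, add_mul, mul_one, hU]
    conv_lhs => rw [hH.spectral_theorem]
    rfl
  rw [h, det_mul_right_comm, hU, one_mul]
  have : (1 + diagonal (RCLike.ofReal ∘ hH.eigenvalues) :
      Matrix (Fin p) (Fin p) ℝ) = diagonal (fun i => 1 + hH.eigenvalues i) := by
    rw [← diagonal_one, diagonal_add]
    congr 1
  rw [this, det_diagonal]
  calc (1:ℝ) = ∏ _i : Fin p, 1 := by simp
  _ ≤ ∏ i, (1 + hH.eigenvalues i) := by
      refine Finset.prod_le_prod (fun i _ => by norm_num) fun i _ => ?_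
      linarith [hM.eigenvalues_nonneg i]

open scoped MatrixOrder in
lemma det_le_det_add {p : ℕ} {A B : Matrix (Fin p) (Fin p) ℝ}
    (hA : A.PosDef) (hB : B.PosSemidef) : A.det ≤ (A + B).det := by
  set S := CFC.sqrt A with hSdef
  have hS : S.PosSemidef := (CFC.sqrt_nonneg A).posSemidef
  have hSS : S * S = A := CFC.sqrt_mul_sqrt_self A hA.posSemidef.nonneg
  have hdetA : 0 < A.det := hA.det_pos
  have hdetS : IsUnit S.det := by
    have : S.det * S.det = A.det := by rw [← det_mul, hSS]
    refine isUnit_iff_ne_zero.mpr fun h => ?_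
    rw [h, mul_zero] at this
    exact hdetA.ne this
  have hSinv : (S⁻¹)ᵀ = S⁻¹ := by
    rw [transpose_nonsing_inv]
    congr 1
    have := hS.1
    simpa [conjTranspose_eq_transpose_of_trivial] using this.eq
  have hM : (S⁻¹ * B * S⁻¹).PosSemidef := by
    have := psd_mul_mul_transpose hB S⁻¹
    rwa [hSinv] at this
  have key : A + B = S * (1 + S⁻¹ * B * S⁻¹) * S := by
    rw [mul_add, add_mul, mul_one, hSS]
    congr 1
    symm
    calc S * (S⁻¹ * B * S⁻¹) * S = (S * S⁻¹) * B * (S⁻¹ * S) := by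
          noncomm_ring
    _ = B := by rw [mul_nonsing_inv _ hdetS, nonsing_inv_mul _ hdetS, one_mul, mul_one]
  have hdSS : S.det * S.det = A.det := by rw [← det_mul, hSS]
  calc A.det = A.det * 1 := by ring
  _ ≤ A.det * (1 + S⁻¹ * B * S⁻¹).det := by
      exact mul_le_mul_of_nonneg_left (one_le_det_one_add hM) hdetA.le
  _ = (A + B).det := by
      rw [key, det_mul, det_mul, ← hdSS]; ring

lemma quadform_eq {p q : ℕ} (B : Matrix (Fin p) (Fin q) ℝ)
    (M : Matrix (Fin q) (Fin q) ℝ) (x : Fin p → ℝ) :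
    x ⬝ᵥ (B * M * Bᵀ) *ᵥ x = (Bᵀ *ᵥ x) ⬝ᵥ M *ᵥ (Bᵀ *ᵥ x) := by
  rw [← mulVec_mulVec, ← mulVec_mulVec, dotProduct_mulVec, mulVec_transpose]

lemma joseph_posDef {n m : ℕ}
    {Pf : Matrix (Fin n) (Fin n) ℝ} (hPf : Pf.PosDef)
    {R : Matrix (Fin m) (Fin m) ℝ} (hR : R.PosDef)
    (H : Matrix (Fin m) (Fin n) ℝ) (K : Matrix (Fin n) (Fin m) ℝ) :
    ((1 - K * H) * Pf * (1 - K * H)ᵀ + K * R * Kᵀ).PosDef := by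
  have hpsd : ((1 - K * H) * Pf * (1 - K * H)ᵀ + K * R * Kᵀ).PosSemidef :=
    (psd_mul_mul_transpose hPf.posSemidef _).add (psd_mul_mul_transpose hR.posSemidef _)
  refine .of_dotProduct_mulVec_pos hpsd.1 fun x hx => ?_
  set y := (1 - K * H)ᵀ *ᵥ x with hy
  set z := Kᵀ *ᵥ x with hz
  have hxyz : x = y + Hᵀ *ᵥ z := by
    rw [hy, hz, mulVec_mulVec, ← transpose_mul, ← add_mulVec, ← transpose_add,
      sub_add_cancel, transpose_one, one_mulVec]
  have hquad : (star x) ⬝ᵥ (((1 - K * H) * Pf * (1 - K * H)ᵀ + K * R * Kᵀ) *ᵥ x)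
      = y ⬝ᵥ Pf *ᵥ y + z ⬝ᵥ R *ᵥ z := by
    rw [star_trivial, add_mulVec, dotProduct_add, quadform_eq, quadform_eq]
  rw [hquad]
  have h1 : 0 ≤ y ⬝ᵥ Pf *ᵥ y := by simpa using hPf.posSemidef.dotProduct_mulVec_nonneg y
  have h2 : 0 ≤ z ⬝ᵥ R *ᵥ z := by simpa using hR.posSemidef.dotProduct_mulVec_nonneg z
  by_cases hy0 : y = 0
  · have hz0 : z ≠ 0 := by
      intro h
      apply hx
      rw [hxyz, hy0, h, mulVec_zero, add_zero]
    have : 0 < z ⬝ᵥ R *ᵥ z := by simpa using hR.dotProduct_mulVec_pos hz0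
    linarith
  · have : 0 < y ⬝ᵥ Pf *ᵥ y := by simpa using hPf.dotProduct_mulVec_pos hy0
    linarith

/-- The Kalman gain `K* = Pᶠ Hᵀ (H Pᶠ Hᵀ + R)⁻¹` minimizes the logarithm of the
generalized variance `log (det (Pᵃ(K)))` of the analysis distribution, where
`Pᵃ(K) = (I − K H) Pᶠ (I − K H)ᵀ + K R Kᵀ`, over all gain matrices `K`. -/
theorem kalman_gain_minimizes_log_generalized_variance
    (n m : ℕ) (hn : 0 < n) (hm : 0 < m)
    (Pf : Matrix (Fin n) (Fin n) ℝ) (hPf : Pf.PosDef)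
    (R : Matrix (Fin m) (Fin m) ℝ) (hR : R.PosDef)
    (H : Matrix (Fin m) (Fin n) ℝ)
    (Pa : Matrix (Fin n) (Fin m) ℝ → Matrix (Fin n) (Fin n) ℝ)
    (hPa : ∀ K, Pa K = (1 - K * H) * Pf * (1 - K * H)ᵀ + K * R * Kᵀ)
    (Kstar : Matrix (Fin n) (Fin m) ℝ)
    (hKstar : Kstar = Pf * Hᵀ * (H * Pf * Hᵀ + R)⁻¹) :
    ∀ K : Matrix (Fin n) (Fin m) ℝ,
      Real.log (Pa Kstar).det ≤ Real.log (Pa K).det := by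
  intro K
  set S : Matrix (Fin m) (Fin m) ℝ := H * Pf * Hᵀ + R with hSdef
  have hPfT : Pfᵀ = Pf := by
    have := hPf.1
    simpa [conjTranspose_eq_transpose_of_trivial] using this.eq
  have hRT : Rᵀ = R := by
    have := hR.1
    simpa [conjTranspose_eq_transpose_of_trivial] using this.eq
  have hS : S.PosDef := by
    have h1 : (H * Pf * Hᵀ).PosSemidef := psd_mul_mul_transpose hPf.posSemidef H
    exact Matrix.PosDef.posSemidef_add h1 hR
  have hST : Sᵀ = S := by
    have := hS.1
    simpa [conjTranspose_eq_transpose_of_trivial] using this.eq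
  have hSu : IsUnit S.det := isUnit_iff_ne_zero.mpr hS.det_pos.ne'
  have e1 : Kstar * S = Pf * Hᵀ := by
    rw [hKstar, Matrix.mul_assoc (Pf * Hᵀ) S⁻¹ S, nonsing_inv_mul _ hSu, Matrix.mul_one]
  have e2 : S * Kstarᵀ = H * Pf := by
    have := congrArg transpose e1
    rw [transpose_mul, hST] at this
    rw [this, transpose_mul, hPfT, transpose_transpose]
  -- normal form for Pa
  have nf : ∀ L : Matrix (Fin n) (Fin m) ℝ,
      Pa L = Pf - L * (S * Kstarᵀ) - (Kstar * S) * Lᵀ + L * S * Lᵀ := by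
    intro L
    rw [hPa, e1, e2]
    have hRS : R = S - H * Pf * Hᵀ := by rw [hSdef]; abel
    rw [hRS, transpose_sub, transpose_mul, transpose_one]
    simp only [Matrix.sub_mul, Matrix.mul_sub, Matrix.one_mul, Matrix.mul_one, Matrix.mul_assoc]
    abel
  have key : Pa K = Pa Kstar + (K - Kstar) * S * (K - Kstar)ᵀ := by
    rw [nf K, nf Kstar, transpose_sub]
    simp only [Matrix.sub_mul, Matrix.mul_sub, Matrix.mul_assoc]
    abel
  have hPaStar : (Pa Kstar).PosDef := by
    rw [hPa]; exact joseph_posDef hPf hR H Kstar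
  have hD : ((K - Kstar) * S * (K - Kstar)ᵀ).PosSemidef :=
    psd_mul_mul_transpose hS.posSemidef _
  have hdet : (Pa Kstar).det ≤ (Pa K).det := by
    rw [key]; exact det_le_det_add hPaStar hD
  exact Real.log_le_log hPaStar.det_pos hdet
end

section
/- Let K* = Pᶠ·Hᵀ·(H·Pᶠ·Hᵀ + R)⁻¹ be the Kalman gain. Then for every n×m real matrix K, (n/2)·log(2·π·e) + (1/2)·log(det(Pᵃ(K*))) ≤ (n/2)·log(2·π·e) + (1/2)·log(det(Pᵃ(K))); that is, the Kalman gain minimizes the differential entropy of the analysis distribution, where the quantity (n/2)·log(2πe) + (1/2)·log(det(Σ)) is the differential entropy of an n-dimensional Gaussian distribution with covariance matrix Σ. -/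
open Matrix

lemma one_le_det_one_add_of_posSemidef {n : ℕ} {C : Matrix (Fin n) (Fin n) ℝ}
    (hC : C.PosSemidef) : 1 ≤ (1 + C).det := by
  have hH := hC.isHermitian
  set U : Matrix (Fin n) (Fin n) ℝ := (hH.eigenvectorUnitary : Matrix (Fin n) (Fin n) ℝ) with hU
  set D : Matrix (Fin n) (Fin n) ℝ :=
    (1 : Matrix (Fin n) (Fin n) ℝ) + diagonal (RCLike.ofReal ∘ hH.eigenvalues) with hDdef
  have hUU : U * star U = 1 := Unitary.mul_star_self_of_mem hH.eigenvectorUnitary.2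
  have hspec : C = U * diagonal (RCLike.ofReal ∘ hH.eigenvalues) * star U := hH.spectral_theorem
  have h1 : (1 : Matrix (Fin n) (Fin n) ℝ) + C = U * D * star U := by
    rw [hDdef, mul_add, mul_one, add_mul, hUU, ← hspec]
  have hdet1 : U.det * (star U).det = 1 := by rw [← det_mul, hUU, det_one]
  have hdd : (1 : ℝ) ≤ D.det := by
    rw [hDdef, ← diagonal_one, diagonal_add, det_diagonal]
    calc (1:ℝ) = ∏ _i : Fin n, (1:ℝ) := by simp
      _ ≤ _ := by
        refine Finset.prod_le_prod (fun i _ => zero_le_one) (fun i _ => ?_)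
        have := hC.eigenvalues_nonneg i
        simp only [Pi.add_apply, Function.comp_apply, Pi.one_apply,
          RCLike.ofReal_real_eq_id, id_eq]
        linarith
  have : (1 + C).det = D.det := by
    rw [h1, det_mul, det_mul, mul_comm U.det, mul_assoc, hdet1, mul_one]
  rw [this]; exact hdd

open scoped MatrixOrder in
lemma det_le_det_add_psd {n : ℕ} {A B : Matrix (Fin n) (Fin n) ℝ}
    (hA : A.PosDef) (hB : B.PosSemidef) : A.det ≤ (A + B).det := by
  set S : Matrix (Fin n) (Fin n) ℝ := CFC.sqrt A with hSdef
  have hSS : S * S = A := CFC.sqrt_mul_sqrt_self A hA.posSemidef.nonneg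
  have hSH : Sᴴ = S := (CFC.sqrt_nonneg A).posSemidef.isHermitian
  have hdetS : S.det * S.det = A.det := by rw [← det_mul, hSS]
  have hdS : S.det ≠ 0 := by
    intro h; rw [h, mul_zero] at hdetS; exact hA.det_pos.ne' hdetS.symm
  have hUnit : IsUnit S.det := hdS.isUnit
  have hinvH : (S⁻¹)ᴴ = S⁻¹ := by rw [conjTranspose_nonsing_inv, hSH]
  have hC : (S⁻¹ * B * S⁻¹).PosSemidef := by
    have := hB.mul_mul_conjTranspose_same S⁻¹
    rwa [hinvH] at this
  have hAB : A + B = S * (1 + S⁻¹ * B * S⁻¹) * S := by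
    rw [mul_add, mul_one, add_mul, hSS]
    congr 1
    rw [← mul_assoc, ← mul_assoc, mul_nonsing_inv _ hUnit, one_mul, mul_assoc,
      nonsing_inv_mul _ hUnit, mul_one]
  have h1 := one_le_det_one_add_of_posSemidef hC
  calc A.det = S.det * 1 * S.det := by rw [mul_one, hdetS]
    _ ≤ S.det * (1 + S⁻¹ * B * S⁻¹).det * S.det := by
        rcases lt_trichotomy S.det 0 with h | h | h
        · nlinarith
        · exact absurd h hdS
        · nlinarith
    _ = (A + B).det := by rw [hAB, det_mul, det_mul]

/-- Under Gaussian error assumptions, the Kalman gain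
`K* = Pᶠ Hᵀ (H Pᶠ Hᵀ + R)⁻¹` minimizes the differential entropy
`(n/2) log (2 π e) + (1/2) log (det Σ)` of the analysis distribution, whose
covariance is `Pᵃ(K) = (I − K H) Pᶠ (I − K H)ᵀ + K R Kᵀ`. -/
theorem kalman_gain_minimizes_differential_entropy
    (n m : ℕ) (hn : 0 < n) (hm : 0 < m)
    (Pf : Matrix (Fin n) (Fin n) ℝ) (hPf : Pf.PosDef)
    (R : Matrix (Fin m) (Fin m) ℝ) (hR : R.PosDef)
    (H : Matrix (Fin m) (Fin n) ℝ)
    (Pa : Matrix (Fin n) (Fin m) ℝ → Matrix (Fin n) (Fin n) ℝ)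
    (hPa : ∀ K, Pa K = (1 - K * H) * Pf * (1 - K * H)ᵀ + K * R * Kᵀ)
    (Kstar : Matrix (Fin n) (Fin m) ℝ)
    (hKstar : Kstar = Pf * Hᵀ * (H * Pf * Hᵀ + R)⁻¹) :
    ∀ K : Matrix (Fin n) (Fin m) ℝ,
      (n : ℝ) / 2 * Real.log (2 * Real.pi * Real.exp 1)
          + 1 / 2 * Real.log (Pa Kstar).det
        ≤ (n : ℝ) / 2 * Real.log (2 * Real.pi * Real.exp 1)
          + 1 / 2 * Real.log (Pa K).det := by
  intro K
  have hPfT : Pfᵀ = Pf := by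
    have h : Pfᴴ = Pf := hPf.isHermitian
    rwa [conjTranspose_eq_transpose_of_trivial] at h
  have hRT : Rᵀ = R := by
    have h : Rᴴ = R := hR.isHermitian
    rwa [conjTranspose_eq_transpose_of_trivial] at h
  set S : Matrix (Fin m) (Fin m) ℝ := H * Pf * Hᵀ + R with hS
  have hST : Sᵀ = S := by
    rw [hS, transpose_add, transpose_mul, transpose_mul, transpose_transpose, hPfT, hRT,
      Matrix.mul_assoc]
  have hSpd : S.PosDef := by
    have h1 : (H * Pf * Hᴴ).PosSemidef := hPf.posSemidef.mul_mul_conjTranspose_same H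
    rw [conjTranspose_eq_transpose_of_trivial] at h1
    exact Matrix.PosDef.posSemidef_add h1 hR
  have hSunit : IsUnit S.det := hSpd.det_pos.ne'.isUnit
  have hKS : Kstar * S = Pf * Hᵀ := by
    rw [hKstar, Matrix.mul_assoc, nonsing_inv_mul S hSunit, Matrix.mul_one]
  have hSK : S * Kstarᵀ = H * Pf := by
    have h := congrArg Matrix.transpose hKS
    rwa [transpose_mul, hST, transpose_mul, transpose_transpose, hPfT] at h
  have e3 : Kstar * (H * Pf) = Pf * Hᵀ * Kstarᵀ := by
    rw [← hSK, ← Matrix.mul_assoc, hKS]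
  have hexp : ∀ J : Matrix (Fin n) (Fin m) ℝ,
      Pa J = Pf - J * (H * Pf) - Pf * Hᵀ * Jᵀ + J * S * Jᵀ := by
    intro J
    rw [hPa J, hS]
    simp only [transpose_sub, transpose_mul, transpose_one, Matrix.sub_mul, Matrix.mul_sub,
      Matrix.mul_one, Matrix.one_mul, hPfT, Matrix.mul_add, Matrix.add_mul, Matrix.mul_assoc]
    abel
  have key : Pa K = Pa Kstar + (K - Kstar) * S * (K - Kstar)ᵀ := by
    have expand : (K - Kstar) * S * (K - Kstar)ᵀ
        = K * S * Kᵀ - K * (S * Kstarᵀ) - Kstar * S * Kᵀ + Kstar * S * Kstarᵀ := by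
      simp only [transpose_sub, Matrix.sub_mul, Matrix.mul_sub, Matrix.mul_assoc]
      abel
    rw [hexp K, hexp Kstar, expand, hSK, hKS, e3]
    abel
  have hPaKstar : (Pa Kstar).PosDef := by
    rw [hPa Kstar]; exact joseph_posDef hPf hR H Kstar
  have hpsd : ((K - Kstar) * S * (K - Kstar)ᵀ).PosSemidef := by
    have h := hSpd.posSemidef.mul_mul_conjTranspose_same (K - Kstar)
    rwa [conjTranspose_eq_transpose_of_trivial] at h
  have hdle : (Pa Kstar).det ≤ (Pa K).det := by
    rw [key]; exact det_le_det_add_psd hPaKstar hpsd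
  have hlog := Real.log_le_log hPaKstar.det_pos hdle
  linarith
end
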